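/- Let V and W be modules with Leibniz operators. The assignment q(v ⊗ w) := v ⊗_A w + (λ/2) ω^{ij} ∇_{V,i}(v) ⊗_A ∇_{W,j}(w) (for v ∈ V, w ∈ W, extended λ-bilinearly) is A₁-balanced, i.e. q(v • a ⊗ w) = q(v ⊗ a • w) for all a ∈ A₁, and hence induces a well-defined map q_{V,W} : V₁ ⊗_{A₁} W₁ → (V ⊗_A W)₁. Moreover q_{V,W} is an A₁-bimodule map, where V ⊗_A W carries the Leibniz operators ∇_j := ∇_{V,j} ⊗ id + id ⊗ ∇_{W,j}; and for a third module with Leibniz operators Z the coherence identity q_{V⊗W,Z} ∘ (q_{V,W} ⊗ id) = q_{V,W⊗Z} ∘ (id ⊗ q_{W,Z}) holds as maps V₁ ⊗_{A₁} W₁ ⊗_{A₁} Z₁ → (V ⊗_A W ⊗_A Z)₁. -/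
import Mathlib


open scoped TensorProduct

namespace Stmt4

/-- The semiclassical data: derivations `δ_i` and an antisymmetric `ω^{ij}` with
entries in a commutative algebra `A` over a field `K` of characteristic zero. -/
structure DefData (K A : Type) [Field K] [CharZero K] [CommRing A] [Algebra K A]
    (n : ℕ) where
  δ : Fin n → A → A
  ω : Fin n → Fin n → A
  δ_add : ∀ i a b, δ i (a + b) = δ i a + δ i b
  δ_leibniz : ∀ i a b, δ i (a * b) = a * δ i b + b * δ i a
  ω_anti : ∀ i j, ω i j = - ω j i

variable {K A : Type} [Field K] [CharZero K] [CommRing A] [Algebra K A] {n : ℕ}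

/-- The scalar `1/2` in `A`. -/
noncomputable def half (K A : Type) [Field K] [CharZero K] [CommRing A] [Algebra K A] : A :=
  algebraMap K A (2⁻¹ : K)

/-- The deformed product on `A₁ = A ⊕ λA` (a pair `(a₀, a₁)` stands for `a₀ + λ a₁`,
with `λ² = 0`):  `a • b = ab + (λ/2) ω^{ij} δ_i(a) δ_j(b)`, extended `λ`-bilinearly. -/
noncomputable def mul1 (D : DefData K A n) (a b : A × A) : A × A :=
  (a.1 * b.1,
   a.1 * b.2 + a.2 * b.1 + half K A * ∑ i, ∑ j, D.ω i j * D.δ i a.1 * D.δ j b.1)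

/-- A module with Leibniz operators: an `A`-module `E` with additive maps `∇_{E,j}`
satisfying `∇_{E,j}(a e) = a ∇_{E,j} e + δ_j(a) e`. -/
structure LeibMod (D : DefData K A n) (E : Type) [AddCommGroup E] [Module A E] where
  nab : Fin n → E → E
  nab_add : ∀ j e f, nab j (e + f) = nab j e + nab j f
  nab_smul : ∀ j a e, nab j (a • e) = a • nab j e + D.δ j a • e

variable {D : DefData K A n} {E : Type} [AddCommGroup E] [Module A E]

/-- Deformed left action of `A₁` on `E₁ = E ⊕ λE`:
`a • e = a e + (λ/2) ω^{ij} δ_i(a) ∇_{E,j}(e)`, extended `λ`-bilinearly. -/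
noncomputable def lact (L : LeibMod D E) (a : A × A) (e : E × E) : E × E :=
  (a.1 • e.1,
   a.1 • e.2 + a.2 • e.1 + ∑ i, ∑ j, (half K A * D.ω i j * D.δ i a.1) • L.nab j e.1)

/-- Deformed right action of `A₁` on `E₁ = E ⊕ λE`:
`e • a = a e − (λ/2) ω^{ij} δ_i(a) ∇_{E,j}(e)`, extended `λ`-bilinearly. -/
noncomputable def ract (L : LeibMod D E) (e : E × E) (a : A × A) : E × E :=
  (a.1 • e.1,
   a.1 • e.2 + a.2 • e.1 - ∑ i, ∑ j, (half K A * D.ω i j * D.δ i a.1) • L.nab j e.1)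

variable {W : Type} [AddCommGroup W] [Module A W]

/-- The natural transformation `q_{V,W}` in the pair representation:
`q(v ⊗ w) = v ⊗_A w + (λ/2) ω^{ij} ∇_{V,i}(v) ⊗_A ∇_{W,j}(w)`, extended `λ`-bilinearly. -/
noncomputable def qpair (LV : LeibMod D E) (LW : LeibMod D W)
    (v : E × E) (w : W × W) : (E ⊗[A] W) × (E ⊗[A] W) :=
  (v.1 ⊗ₜ[A] w.1,
   v.1 ⊗ₜ[A] w.2 + v.2 ⊗ₜ[A] w.1 +
     ∑ i, ∑ j, (half K A * D.ω i j) • (LV.nab i v.1 ⊗ₜ[A] LW.nab j w.1))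

lemma omega_sum_swap {M : Type} [AddCommGroup M] [Module A M] (D : DefData K A n)
    (h : A) (d : Fin n → A) (g : Fin n → M) :
    ∑ i, ∑ j, (h * D.ω i j * d j) • g i = - ∑ i, ∑ j, (h * D.ω i j * d i) • g j := by
  rw [eq_neg_iff_add_eq_zero, Finset.sum_comm, ← Finset.sum_add_distrib]
  refine Finset.sum_eq_zero fun i _ => ?_
  rw [← Finset.sum_add_distrib]
  refine Finset.sum_eq_zero fun j _ => ?_
  rw [D.ω_anti j i, mul_neg, neg_mul, neg_smul, neg_add_cancel]

lemma omega_sum_swap' {M : Type} [AddCommGroup M] [Module A M] (D : DefData K A n)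
    (h : A) (d : Fin n → A) (g : Fin n → M) :
    ∑ i, ∑ j, (h * (d j * D.ω i j)) • g i = - ∑ i, ∑ j, (h * (d i * D.ω i j)) • g j := by
  rw [eq_neg_iff_add_eq_zero, Finset.sum_comm, ← Finset.sum_add_distrib]
  refine Finset.sum_eq_zero fun i _ => ?_
  rw [← Finset.sum_add_distrib]
  refine Finset.sum_eq_zero fun j _ => ?_
  rw [D.ω_anti j i, mul_neg, mul_neg, neg_smul, neg_add_cancel]

/-- `q_{V,W}` is `A₁`-balanced (hence induces a well-defined map
`V₁ ⊗_{A₁} W₁ → (V ⊗_A W)₁`), it is an `A₁`-bimodule map for the tensor-product Leibniz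
operators `∇_{V,j} ⊗ id + id ⊗ ∇_{W,j}`, and the coherence identity
`q_{V⊗W,Z} ∘ (q_{V,W} ⊗ id) = q_{V,W⊗Z} ∘ (id ⊗ q_{W,Z})` holds. -/
theorem statement_4 (D : DefData K A n)
    {V W Z : Type} [AddCommGroup V] [Module A V] [AddCommGroup W] [Module A W]
    [AddCommGroup Z] [Module A Z]
    (LV : LeibMod D V) (LW : LeibMod D W) (LZ : LeibMod D Z)
    (LVW : LeibMod D (V ⊗[A] W))
    (hLVW : ∀ (j : Fin n) (v : V) (w : W),
      LVW.nab j (v ⊗ₜ[A] w) = LV.nab j v ⊗ₜ[A] w + v ⊗ₜ[A] LW.nab j w)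
    (LWZ : LeibMod D (W ⊗[A] Z))
    (hLWZ : ∀ (j : Fin n) (w : W) (z : Z),
      LWZ.nab j (w ⊗ₜ[A] z) = LW.nab j w ⊗ₜ[A] z + w ⊗ₜ[A] LZ.nab j z) :
    (∀ (a : A × A) (v : V × V) (w : W × W),
        qpair LV LW (ract LV v a) w = qpair LV LW v (lact LW a w)) ∧
    (∀ (a : A × A) (v : V × V) (w : W × W),
        qpair LV LW (lact LV a v) w = lact LVW a (qpair LV LW v w)) ∧
    (∀ (v : V × V) (w : W × W) (a : A × A),
        qpair LV LW v (ract LW w a) = ract LVW (qpair LV LW v w) a) ∧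
    (∀ (v : V × V) (w : W × W) (z : Z × Z),
        (TensorProduct.assoc A V W Z) ((qpair LVW LZ (qpair LV LW v w) z).1)
            = (qpair LV LWZ v (qpair LW LZ w z)).1 ∧
        (TensorProduct.assoc A V W Z) ((qpair LVW LZ (qpair LV LW v w) z).2)
            = (qpair LV LWZ v (qpair LW LZ w z)).2) := by
  refine ⟨?_, ?_, ?_, ?_⟩
  · intro a v w
    simp only [qpair, ract, lact, Prod.mk.injEq]
    refine ⟨TensorProduct.smul_tmul _ _ _, ?_⟩
    simp only [LV.nab_smul, LW.nab_smul, TensorProduct.tmul_add, TensorProduct.add_tmul,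
      TensorProduct.sub_tmul, TensorProduct.tmul_sub, TensorProduct.sum_tmul,
      TensorProduct.tmul_sum, TensorProduct.tmul_smul, ← TensorProduct.smul_tmul',
      smul_add, smul_smul, Finset.smul_sum, smul_sub, Finset.sum_add_distrib]
    rw [omega_sum_swap D (half K A) (fun j => D.δ j a.1) (fun i => LV.nab i v.1 ⊗ₜ[A] w.1)]
    abel
  · intro a v w
    simp only [qpair, ract, lact, Prod.mk.injEq]
    refine ⟨TensorProduct.smul_tmul' _ _ _, ?_⟩
    simp only [hLVW, LV.nab_smul, LW.nab_smul, TensorProduct.tmul_add, TensorProduct.add_tmul,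
      TensorProduct.sub_tmul, TensorProduct.tmul_sub, TensorProduct.sum_tmul,
      TensorProduct.tmul_sum, TensorProduct.tmul_smul, ← TensorProduct.smul_tmul',
      smul_add, smul_smul, Finset.smul_sum, smul_sub, Finset.sum_add_distrib,
      mul_comm, mul_assoc, mul_left_comm]
    abel
  · intro v w a
    simp only [qpair, ract, lact, Prod.mk.injEq]
    refine ⟨(TensorProduct.tmul_smul _ _ _).trans (TensorProduct.smul_tmul' _ _ _).symm, ?_⟩
    simp only [hLVW, LV.nab_smul, LW.nab_smul, TensorProduct.tmul_add, TensorProduct.add_tmul,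
      TensorProduct.sub_tmul, TensorProduct.tmul_sub, TensorProduct.sum_tmul,
      TensorProduct.tmul_sum, TensorProduct.tmul_smul, ← TensorProduct.smul_tmul',
      smul_add, smul_smul, Finset.smul_sum, smul_sub, Finset.sum_add_distrib,
      Finset.sum_sub_distrib, mul_comm, mul_assoc, mul_left_comm]
    rw [omega_sum_swap' D (half K A) (fun j => D.δ j a.1) (fun i => LV.nab i v.1 ⊗ₜ[A] w.1)]
    abel
  · intro v w z
    constructor
    · simp [qpair]
    · simp only [qpair, hLVW, hLWZ, TensorProduct.tmul_add, TensorProduct.add_tmul,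
        TensorProduct.sum_tmul, TensorProduct.tmul_sum, TensorProduct.tmul_smul,
        ← TensorProduct.smul_tmul', map_add, map_sum, map_smul,
        TensorProduct.assoc_tmul, smul_add, Finset.sum_add_distrib]
      abel


end Stmt4
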